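/- A countable union of Haar-null Borel sets in a separable Banach space is Haar-null: if A₁, A₂, … are Borel sets each admitting a Borel probability measure μₙ with μₙ(x + Aₙ) = 0 for all x, then there exists a single Borel probability measure μ with μ(x + ⋃ₙ Aₙ) = 0 for all x ∈ X. -/

import Mathlib

open MeasureTheory Set ProbabilityTheory Filter Topology TopologicalSpace

lemma quantile_map (ρ : Measure ℝ) [IsProbabilityMeasure ρ] :
    ∃ q : ℝ → ℝ, Measurable q ∧ (volume.restrict (Ioc (0:ℝ) 1)).map q = ρ := by
  classical
  set F : ℝ → ℝ := fun x => cdf ρ x with hF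
  have hFmono : Monotone F := monotone_cdf ρ
  set q : ℝ → ℝ := fun u => if u ∈ Ioo (0:ℝ) 1 then sInf {x | u ≤ F x} else 0 with hq
  have key : ∀ u ∈ Ioo (0:ℝ) 1, ∀ b : ℝ, (q u ≤ b ↔ u ≤ F b) := by
    intro u hu b
    have hne : {x | u ≤ F x}.Nonempty :=
      ((tendsto_cdf_atTop ρ).eventually (eventually_ge_nhds hu.2)).exists
    have hbdd : BddBelow {x | u ≤ F x} := by
      obtain ⟨x₀, hx₀⟩ := ((tendsto_cdf_atBot ρ).eventually (eventually_lt_nhds hu.1)).exists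
      refine ⟨x₀, fun y hy => ?_⟩
      by_contra hlt
      push_neg at hlt
      exact absurd (le_trans hy (hFmono hlt.le)) (not_le.2 hx₀)
    have hqu : q u = sInf {x | u ≤ F x} := if_pos hu
    rw [hqu]
    constructor
    · intro h
      have hinf : u ≤ F (sInf {x | u ≤ F x}) := by
        set a := sInf {x | u ≤ F x} with ha
        have htd : Tendsto F (𝓝[>] a) (𝓝 (F a)) :=
          ((cdf ρ).right_continuous a).tendsto.mono_left
            (nhdsWithin_mono _ Ioi_subset_Ici_self)
        refine ge_of_tendsto htd ?_
        filter_upwards [self_mem_nhdsWithin] with x hx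
        obtain ⟨y, hy, hyx⟩ := exists_lt_of_csInf_lt hne hx
        exact le_trans hy (hFmono hyx.le)
      exact le_trans hinf (hFmono h)
    · intro h
      exact csInf_le hbdd h
  have hpre : ∀ b : ℝ, q ⁻¹' Iic b =
      (Ioo (0:ℝ) 1 ∩ Iic (F b)) ∪ ((Ioo (0:ℝ) 1)ᶜ ∩ {_u : ℝ | (0:ℝ) ≤ b}) := by
    intro b
    ext u
    simp only [mem_preimage, mem_Iic, mem_union, mem_inter_iff, mem_compl_iff, mem_setOf_eq]
    by_cases hu : u ∈ Ioo (0:ℝ) 1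
    · rw [key u hu b]; simp [hu]
    · have : q u = 0 := if_neg hu
      rw [this]; simp [hu]
  have hqmeas : Measurable q := by
    apply measurable_of_Iic
    intro b
    rw [hpre b]
    exact (measurableSet_Ioo.inter measurableSet_Iic).union
      (measurableSet_Ioo.compl.inter (MeasurableSet.const _))
  refine ⟨q, hqmeas, ?_⟩
  rw [(Measure.restrict_congr_set Ioo_ae_eq_Ioc).symm]
  have : IsProbabilityMeasure ((volume.restrict (Ioo (0:ℝ) 1)).map q) := by
    have : IsProbabilityMeasure (volume.restrict (Ioo (0:ℝ) 1)) := by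
      constructor; simp [Real.volume_Ioo]
    exact Measure.isProbabilityMeasure_map hqmeas.aemeasurable
  refine Measure.ext_of_Iic _ _ (fun b => ?_)
  rw [Measure.map_apply hqmeas measurableSet_Iic, Measure.restrict_apply' measurableSet_Ioo]
  have hset : q ⁻¹' Iic b ∩ Ioo (0:ℝ) 1 = Iic (F b) ∩ Ioo (0:ℝ) 1 := by
    ext u
    simp only [mem_inter_iff, mem_preimage, mem_Iic, and_congr_left_iff]
    intro hu
    exact key u hu b
  rw [hset]
  have h0 : 0 ≤ F b := cdf_nonneg ρ b
  have h1 : F b ≤ 1 := cdf_le_one ρ b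
  have hvol : (volume : Measure ℝ) (Iic (F b) ∩ Ioo (0:ℝ) 1) = ENNReal.ofReal (F b) := by
    have hsub1 : Iic (F b) ∩ Ioo (0:ℝ) 1 ⊆ Ioc 0 (F b) := by
      rintro u ⟨h2, h3, _⟩; exact ⟨h3, h2⟩
    have hsub2 : Ioo (0:ℝ) (F b) ⊆ Iic (F b) ∩ Ioo (0:ℝ) 1 := by
      rintro u ⟨h2, h3⟩; exact ⟨h3.le, h2, lt_of_lt_of_le h3 h1⟩
    refine le_antisymm ?_ ?_
    · calc (volume : Measure ℝ) (Iic (F b) ∩ Ioo (0:ℝ) 1) ≤ volume (Ioc 0 (F b)) :=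
            measure_mono hsub1
        _ = ENNReal.ofReal (F b) := by rw [Real.volume_Ioc, sub_zero]
    · calc ENNReal.ofReal (F b) = volume (Ioo (0:ℝ) (F b)) := by
            rw [Real.volume_Ioo, sub_zero]
        _ ≤ _ := measure_mono hsub2
  rw [hvol, hF]
  exact ofReal_cdf ρ b

lemma circle_to_Ioc :
    (volume : Measure UnitAddCircle).map
      (fun t => ((AddCircle.measurableEquivIoc 1 0 t : Ioc (0:ℝ) (0+1)) : ℝ))
      = volume.restrict (Ioc (0:ℝ) (0+1)) := by
  set j : UnitAddCircle → ℝ :=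
    fun t => ((AddCircle.measurableEquivIoc 1 0 t : Ioc (0:ℝ) (0+1)) : ℝ) with hj
  have hjm : Measurable j :=
    measurable_subtype_coe.comp (AddCircle.measurableEquivIoc 1 0).measurable
  have hmk := AddCircle.measurePreserving_mk 1 0
  have hid : ∀ x ∈ Ioc (0:ℝ) (0+1), j ((x : ℝ) : UnitAddCircle) = x := by
    intro x hx
    have h2 : (AddCircle.equivIoc 1 0) ((x : ℝ) : UnitAddCircle) = ⟨x, hx⟩ := by
      rw [Equiv.apply_eq_iff_eq_symm_apply]; rfl
    show ((AddCircle.equivIoc 1 0) ((x : ℝ) : UnitAddCircle) : ℝ) = x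
    rw [h2]
  calc (volume : Measure UnitAddCircle).map j
      = ((volume.restrict (Ioc (0:ℝ) (0+1))).map ((↑) : ℝ → UnitAddCircle)).map j := by
        rw [hmk.map_eq]
    _ = (volume.restrict (Ioc (0:ℝ) (0+1))).map (j ∘ ((↑) : ℝ → UnitAddCircle)) :=
        Measure.map_map hjm AddCircle.measurable_mk'
    _ = (volume.restrict (Ioc (0:ℝ) (0+1))).map id := by
        refine Measure.map_congr ?_
        exact (ae_restrict_iff' measurableSet_Ioc).2 (Eventually.of_forall hid)
    _ = volume.restrict (Ioc (0:ℝ) (0+1)) := Measure.map_id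

lemma exists_circle_map {X : Type*} [MeasurableSpace X] [StandardBorelSpace X] [Nonempty X]
    (m : Measure X) [IsProbabilityMeasure m] :
    ∃ g : UnitAddCircle → X, Measurable g ∧ (volume : Measure UnitAddCircle).map g = m := by
  classical
  set f := embeddingReal X with hfdef
  have hf := measurableEmbedding_embeddingReal X
  set ρ : Measure ℝ := m.map f with hρ
  have : IsProbabilityMeasure ρ := Measure.isProbabilityMeasure_map hf.measurable.aemeasurable
  obtain ⟨q, hqm, hqmap⟩ := quantile_map ρ
  set r : ℝ → X := fun y => if h : ∃ x, f x = y then h.choose else Classical.arbitrary X with hr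
  have hrf : ∀ x, r (f x) = x := by
    intro x
    have h : ∃ x', f x' = f x := ⟨x, rfl⟩
    have := h.choose_spec
    simp only [hr, dif_pos h]
    exact hf.injective this
  have hrm : Measurable r := by
    intro B hB
    have : r ⁻¹' B = (f '' B) ∪ ((range f)ᶜ ∩ {_y : ℝ | Classical.arbitrary X ∈ B}) := by
      ext y
      by_cases h : ∃ x, f x = y
      · have hy : y ∈ range f := ⟨h.choose, h.choose_spec⟩
        simp only [mem_preimage, hr, dif_pos h, mem_union, mem_inter_iff, mem_compl_iff, hy,
          not_true, false_and, or_false, mem_setOf_eq]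
        constructor
        · intro hc; exact ⟨h.choose, hc, h.choose_spec⟩
        · rintro ⟨x, hx, hxy⟩
          have : h.choose = x := hf.injective (h.choose_spec.trans hxy.symm)
          rwa [this]
      · have hy : y ∉ range f := fun ⟨x, hx⟩ => h ⟨x, hx⟩
        simp only [mem_preimage, hr, dif_neg h, mem_union, mem_inter_iff, mem_compl_iff, hy,
          not_false_iff, true_and, mem_setOf_eq]
        constructor
        · intro hc; right; exact hc
        · rintro (⟨x, _, hxy⟩ | hc)
          · exact absurd ⟨x, hxy⟩ hy
          · exact hc
    rw [this]
    exact ((hf.measurableSet_image' hB)).union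
      ((hf.measurableSet_range.compl).inter (MeasurableSet.const _))
  set j : UnitAddCircle → ℝ :=
    fun t => ((AddCircle.measurableEquivIoc 1 0 t : Ioc (0:ℝ) (0+1)) : ℝ) with hjdef
  have hjm : Measurable j :=
    measurable_subtype_coe.comp (AddCircle.measurableEquivIoc 1 0).measurable
  refine ⟨r ∘ q ∘ j, hrm.comp (hqm.comp hjm), ?_⟩
  have step1 : (volume : Measure UnitAddCircle).map j = volume.restrict (Ioc (0:ℝ) 1) := by
    rw [circle_to_Ioc, zero_add]
  calc (volume : Measure UnitAddCircle).map (r ∘ q ∘ j)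
      = (((volume : Measure UnitAddCircle).map j).map q).map r := by
        rw [Measure.map_map hqm hjm, Measure.map_map hrm (hqm.comp hjm)]
    _ = ρ.map r := by rw [step1, hqmap]
    _ = m.map (r ∘ f) := Measure.map_map hrm hf.measurable
    _ = m := by
        have : r ∘ f = id := funext hrf
        rw [this, Measure.map_id]

lemma image_translate {X : Type*} [AddCommGroup X] (z : X) (A : Set X) :
    (fun a => z + a) '' A = (fun y => -z + y) ⁻¹' A := by
  ext y
  simp only [mem_image, mem_preimage]
  constructor
  · rintro ⟨a, ha, rfl⟩; simpa using ha
  · intro h; exact ⟨-z + y, h, by abel⟩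

lemma small_witness {X : Type*} [NormedAddCommGroup X] [TopologicalSpace.SeparableSpace X]
    [MeasurableSpace X] [BorelSpace X]
    (A : Set X) (hA : MeasurableSet A) (μ : Measure X) [IsProbabilityMeasure μ]
    (hnull : ∀ x : X, μ ((fun a => x + a) '' A) = 0) (ε : ℝ) (hε : 0 < ε) :
    ∃ m : Measure X, IsProbabilityMeasure m ∧ m (Metric.closedBall 0 ε) = 1 ∧
      ∀ z : X, m ((fun a => z + a) '' A) = 0 := by
  obtain ⟨D, hDc, hDd⟩ := TopologicalSpace.exists_countable_dense X
  have hcover : (⋃ c ∈ D, Metric.closedBall c ε) = univ := by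
    refine eq_univ_of_forall fun x => ?_
    obtain ⟨c, hcD, hc⟩ := hDd.exists_mem_open Metric.isOpen_ball
      ⟨x, Metric.mem_ball_self hε⟩
    exact mem_biUnion hcD (Metric.ball_subset_closedBall (Metric.mem_ball'.1 hc))
  have hex : ∃ c ∈ D, μ (Metric.closedBall c ε) ≠ 0 := by
    by_contra h
    push_neg at h
    have : μ (⋃ c ∈ D, Metric.closedBall c ε) = 0 :=
      (measure_biUnion_null_iff hDc).2 h
    rw [hcover, measure_univ] at this
    exact one_ne_zero this
  obtain ⟨c, _, hB⟩ := hex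
  set B := Metric.closedBall c ε with hBdef
  have hBfin : μ B ≠ ⊤ := (measure_lt_top μ B).ne
  set m₀ : Measure X := (μ B)⁻¹ • μ.restrict B with hm₀
  have hm₀prob : IsProbabilityMeasure m₀ := by
    constructor
    rw [hm₀, Measure.smul_apply, smul_eq_mul, Measure.restrict_apply_univ,
      ENNReal.inv_mul_cancel hB hBfin]
  have hm₀null : ∀ z : X, m₀ ((fun a => z + a) '' A) = 0 := by
    intro z
    rw [hm₀, Measure.smul_apply, smul_eq_mul]
    have : μ.restrict B ((fun a => z + a) '' A) ≤ μ ((fun a => z + a) '' A) :=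
      Measure.restrict_le_self _
    rw [hnull z] at this
    rw [le_antisymm this zero_le, mul_zero]
  have hm₀B : m₀ B = 1 := by
    rw [hm₀, Measure.smul_apply, smul_eq_mul, Measure.restrict_apply' measurableSet_closedBall,
      inter_self, ENNReal.inv_mul_cancel hB hBfin]
  have hmeas : Measurable (fun y : X => -c + y) := measurable_const_add _
  refine ⟨m₀.map (fun y => -c + y), Measure.isProbabilityMeasure_map hmeas.aemeasurable, ?_, ?_⟩
  · rw [Measure.map_apply hmeas measurableSet_closedBall]
    have : (fun y : X => -c + y) ⁻¹' Metric.closedBall 0 ε = B := by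
      ext y
      simp only [mem_preimage, Metric.mem_closedBall, hBdef, dist_eq_norm]
      rw [show -c + y - 0 = y - c by abel]
    rw [this, hm₀B]
  · intro z
    rw [Measure.map_apply hmeas]
    · have : (fun y : X => -c + y) ⁻¹' ((fun a => z + a) '' A) = (fun a => (c + z) + a) '' A := by
        rw [image_translate, image_translate]
        ext y
        simp only [mem_preimage]
        rw [show -z + (-c + y) = -(c + z) + y from by abel]
      rw [this, hm₀null]
    · rw [image_translate]
      exact (measurable_const_add (-z)) hA

noncomputable section

instance : IsProbabilityMeasure (volume : Measure UnitAddCircle) :=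
  ⟨by rw [AddCircle.measure_univ]; norm_num⟩

/-- the whole space as a positive compact set. -/
def univPC (Γ : Type*) [TopologicalSpace Γ] [CompactSpace Γ] [Nonempty Γ] :
    PositiveCompacts Γ where
  carrier := univ
  isCompact' := isCompact_univ
  interior_nonempty' := by rw [interior_univ]; exact univ_nonempty

lemma invariant_prob_eq {Γ : Type*} [AddGroup Γ] [TopologicalSpace Γ] [IsTopologicalAddGroup Γ]
    [MeasurableSpace Γ] [BorelSpace Γ] [SecondCountableTopology Γ] [CompactSpace Γ] [Nonempty Γ]
    (μ ν : Measure Γ) [IsProbabilityMeasure μ] [IsProbabilityMeasure ν]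
    [μ.IsAddLeftInvariant] [ν.IsAddLeftInvariant] : μ = ν := by
  have h1 := Measure.addHaarMeasure_unique μ (univPC Γ)
  have h2 := Measure.addHaarMeasure_unique ν (univPC Γ)
  have hμ : μ (univPC Γ) = 1 := by
    show μ univ = 1; exact measure_univ
  have hν : ν (univPC Γ) = 1 := by
    show ν univ = 1; exact measure_univ
  rw [h1, h2, hμ, hν]

lemma map_addequiv_invariant {Γ Δ : Type*} [AddGroup Γ] [TopologicalSpace Γ]
    [IsTopologicalAddGroup Γ] [MeasurableSpace Γ] [BorelSpace Γ]
    [AddGroup Δ] [TopologicalSpace Δ] [IsTopologicalAddGroup Δ] [MeasurableSpace Δ] [BorelSpace Δ]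
    [SecondCountableTopology Δ]
    (e : Γ ≃ₜ Δ) (he : ∀ a b : Γ, e (a + b) = e a + e b)
    (μ : Measure Γ) [μ.IsAddLeftInvariant] : (μ.map e).IsAddLeftInvariant := by
  constructor
  intro h
  rw [Measure.map_map (measurable_const_add h) e.continuous.measurable]
  have : (fun d => h + d) ∘ e = e ∘ (fun g => e.symm h + g) := by
    funext g
    simp only [Function.comp_apply]
    rw [he, e.apply_symm_apply]
  rw [this, ← Measure.map_map e.continuous.measurable (measurable_const_add _),
    map_add_left_eq_self μ _]

abbrev Circ := UnitAddCircle
abbrev GG := ℕ → Circ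
abbrev HH (k : ℕ) := (j : {j : ℕ // j ≠ k}) → Circ

def PG : Measure GG := Measure.addHaarMeasure (univPC GG)
def QH (k : ℕ) : Measure (HH k) := Measure.addHaarMeasure (univPC (HH k))

instance : PG.IsAddLeftInvariant := by unfold PG; infer_instance
instance (k : ℕ) : (QH k).IsAddLeftInvariant := by unfold QH; infer_instance

instance : IsProbabilityMeasure PG :=
  ⟨by have := Measure.addHaarMeasure_self (K₀ := univPC GG); exact this⟩
instance (k : ℕ) : IsProbabilityMeasure (QH k) :=
  ⟨by have := Measure.addHaarMeasure_self (K₀ := univPC (HH k)); exact this⟩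

def φG (k : ℕ) : GG ≃ₜ Circ × HH k := Homeomorph.piSplitAt k (fun _ => Circ)

lemma φG_add (k : ℕ) (a b : GG) : φG k (a + b) = φG k a + φG k b := rfl

lemma split_haar (k : ℕ) :
    PG.map (φG k) = (volume : Measure Circ).prod (QH k) := by
  haveI h1 : (PG.map (φG k)).IsAddLeftInvariant :=
    map_addequiv_invariant (φG k) (φG_add k) PG
  haveI h2 : IsProbabilityMeasure (PG.map (φG k)) :=
    Measure.isProbabilityMeasure_map (φG k).continuous.measurable.aemeasurable
  haveI : ((volume : Measure Circ).prod (QH k)).IsAddLeftInvariant :=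
    Measure.prod.instIsAddLeftInvariant
  exact invariant_prob_eq _ _

end


/-- A countable union of Haar-null Borel sets in a separable Banach space is Haar-null. -/
theorem stmt_11 {X : Type*} [NormedAddCommGroup X] [NormedSpace ℝ X] [CompleteSpace X]
    [TopologicalSpace.SeparableSpace X] [MeasurableSpace X] [BorelSpace X]
    (A : ℕ → Set X) (hA : ∀ n, MeasurableSet (A n))
    (μ : ℕ → Measure X) (hprob : ∀ n, IsProbabilityMeasure (μ n))
    (hnull : ∀ n, ∀ x : X, μ n ((fun a => x + a) '' A n) = 0) :
    ∃ ν : Measure X, IsProbabilityMeasure ν ∧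
      ∀ x : X, ν ((fun a => x + a) '' ⋃ n, A n) = 0 := by
  classical
  haveI : Nonempty X := ⟨0⟩
  haveI : ∀ n, IsProbabilityMeasure (μ n) := hprob
  set ε : ℕ → ℝ := fun n => (1/2 : ℝ)^n with hε
  have hεpos : ∀ n, 0 < ε n := fun n => by positivity
  have hw : ∀ n : ℕ, ∃ m : Measure X, IsProbabilityMeasure m ∧
      m (Metric.closedBall 0 (ε n)) = 1 ∧ ∀ z : X, m ((fun a => z + a) '' A n) = 0 :=
    fun n => small_witness (A n) (hA n) (μ n) (hnull n) (ε n) (hεpos n)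
  choose m hmprob hmball hmnull using hw
  haveI := hmprob
  have hgex : ∀ n : ℕ, ∃ g : Circ → X, Measurable g ∧ (volume : Measure Circ).map g = m n :=
    fun n => exists_circle_map (m n)
  choose g hgm hgmap using hgex
  set gh : ℕ → Circ → X :=
    fun n t => if g n t ∈ Metric.closedBall (0:X) (ε n) then g n t else 0 with hgh
  have ghm : ∀ n, Measurable (gh n) :=
    fun n => Measurable.ite ((hgm n) measurableSet_closedBall) (hgm n) measurable_const
  have ghbound : ∀ n t, ‖gh n t‖ ≤ ε n := by
    intro n t
    by_cases h : g n t ∈ Metric.closedBall (0:X) (ε n)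
    · have : gh n t = g n t := if_pos h
      rw [this]; exact mem_closedBall_zero_iff.1 h
    · have : gh n t = 0 := if_neg h
      rw [this, norm_zero]; exact (hεpos n).le
  have ghlaw : ∀ n, (volume : Measure Circ).map (gh n) = m n := by
    intro n
    rw [← hgmap n]
    apply Measure.map_congr
    have h2 : (volume.map (g n)) (Metric.closedBall (0:X) (ε n))ᶜ = 0 := by
      rw [hgmap n, measure_compl measurableSet_closedBall (measure_lt_top _ _).ne, hmball n,
        measure_univ, tsub_self]
    rw [Measure.map_apply (hgm n) measurableSet_closedBall.compl] at h2
    have hsub : {t : Circ | ¬ gh n t = g n t} ⊆ g n ⁻¹' (Metric.closedBall (0:X) (ε n))ᶜ := by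
      intro t ht
      simp only [mem_setOf_eq] at ht
      by_contra hc
      simp only [mem_preimage, mem_compl_iff, not_not] at hc
      exact ht (if_pos hc)
    exact ae_iff.2 (measure_mono_null hsub h2)
  have hsum : ∀ ω : GG, Summable (fun n => gh n (ω n)) := by
    intro ω
    apply Summable.of_norm
    refine Summable.of_nonneg_of_le (fun n => norm_nonneg _) (fun n => ghbound n (ω n)) ?_
    exact summable_geometric_of_lt_one (by norm_num) (by norm_num)
  set F : GG → X := fun ω => ∑' n, gh n (ω n) with hF
  have hFmeas : Measurable F := by
    have hpart : ∀ N : ℕ, Measurable (fun ω : GG => ∑ n ∈ Finset.range N, gh n (ω n)) :=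
      fun N => Finset.measurable_sum _ (fun n _ => (ghm n).comp (measurable_pi_apply n))
    apply measurable_of_tendsto_metrizable hpart
    rw [tendsto_pi_nhds]
    intro ω
    exact (hsum ω).hasSum.tendsto_sum_nat
  refine ⟨PG.map F, Measure.isProbabilityMeasure_map hFmeas.aemeasurable, ?_⟩
  intro x
  rw [image_iUnion]
  apply measure_iUnion_null
  intro k
  set B := (fun a => x + a) '' A k with hB
  have hBmeas : MeasurableSet B := by
    rw [hB, image_translate]; exact (measurable_const_add _) (hA k)
  have hSmeas : MeasurableSet ((F ∘ (φG k).symm) ⁻¹' B) :=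
    (hFmeas.comp (φG k).symm.continuous.measurable) hBmeas
  rw [Measure.map_apply hFmeas hBmeas]
  have hFpre : F ⁻¹' B = (φG k) ⁻¹' ((F ∘ (φG k).symm) ⁻¹' B) := by
    ext ω
    simp [Homeomorph.symm_apply_apply]
  rw [hFpre, ← Measure.map_apply (φG k).continuous.measurable hSmeas, split_haar k,
    Measure.prod_apply_symm hSmeas]
  have hzero : ∀ h : HH k,
      (volume : Measure Circ) ((fun t => (t, h)) ⁻¹' ((F ∘ (φG k).symm) ⁻¹' B)) = 0 := by
    intro h
    set w : X := ∑' n, (if hn : n = k then 0 else gh n (h ⟨n, hn⟩)) with hwdef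
    have hcomp : ∀ t : Circ, F ((φG k).symm (t, h)) = gh k t + w := by
      intro t
      set ω := (φG k).symm (t, h) with hω
      have hωk : ω k = t := congrArg Prod.fst ((φG k).apply_symm_apply (t, h))
      have hωsnd : (fun j : {j : ℕ // j ≠ k} => ω ↑j) = h :=
        congrArg Prod.snd ((φG k).apply_symm_apply (t, h))
      have hωn : ∀ n (hn : n ≠ k), ω n = h ⟨n, hn⟩ :=
        fun n hn => congrFun hωsnd ⟨n, hn⟩
      show (∑' n, gh n (ω n)) = gh k t + w
      rw [Summable.tsum_eq_add_tsum_ite (hsum ω) k, hωk]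
      congr 1
      apply tsum_congr
      intro n
      by_cases hn : n = k
      · rw [if_pos hn, dif_pos hn]
      · rw [if_neg hn, dif_neg hn, hωn n hn]
    have hset : (fun t => (t, h)) ⁻¹' ((F ∘ (φG k).symm) ⁻¹' B)
        = gh k ⁻¹' ((fun a => (x - w) + a) '' A k) := by
      ext t
      simp only [mem_preimage, Function.comp_apply, hcomp t, hB, mem_image]
      constructor
      · rintro ⟨a, ha, heq⟩
        refine ⟨a, ha, ?_⟩
        rw [eq_sub_of_add_eq heq.symm]
        abel
      · rintro ⟨a, ha, heq⟩
        refine ⟨a, ha, ?_⟩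
        rw [← heq]
        abel
    have hmeas' : MeasurableSet ((fun a => (x - w) + a) '' A k) := by
      rw [image_translate]; exact (measurable_const_add _) (hA k)
    rw [hset, ← Measure.map_apply (ghm k) hmeas', ghlaw k]
    exact hmnull k (x - w)
  rw [lintegral_congr hzero, lintegral_zero]
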